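/- Let X be a smooth 4-manifold. In local coordinates x¹,…,x⁴, define on the odd bundle SX = Π((X×ℝ) ⊕ TX ⊕ Λ²₊TX) the odd vector fields D₀ = ∂_θ - θⁱ∂_{xⁱ} and Q₀ = ∂_θ + θⁱ∂_{xⁱ}, and the 1-form-valued odd vector fields D₁ = ∂_{θⁱ}dxⁱ - θ ∂_{xⁱ}dxⁱ - M and Q₁ = ∂_{θⁱ}dxⁱ + θ ∂_{xⁱ}dxⁱ + M (with M the canonical element defined below). Then with the bracket [A,B] = ½(AB - (-1)^{π(A)π(B)}BA), one has [D₀, D₁] = -d and [Q₀, Q₁] = d, where d is the de Rham differential under the identification of functions on the ΠTX component with differential forms. -/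

import Mathlib

open MvPolynomial

noncomputable section

/-- The coordinate superalgebra of a superspace with even coordinates indexed by `σ` and
`m` odd coordinates: an element assigns to each odd monomial `θ^S` (`S ⊆ Fin m`, indices
in increasing order) a polynomial coefficient in the even coordinates. -/
abbrev SAlg (σ : Type) (m : ℕ) := Finset (Fin m) → MvPolynomial σ ℝ

/-- The even partial derivative `∂/∂y_v`. -/
def evD {σ : Type} {m : ℕ} (v : σ) (f : SAlg σ m) : SAlg σ m :=
  fun S => MvPolynomial.pderiv v (f S)

/-- The sign `(-1)^{#{j ∈ S : j < i}}` of anticommuting `θ_i` into the monomial `θ^S`. -/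
def osgn {m : ℕ} (i : Fin m) (S : Finset (Fin m)) : ℝ :=
  (-1) ^ (S.filter (fun j => j < i)).card

/-- The odd partial derivative `∂/∂θ_i`. -/
def oddD {σ : Type} {m : ℕ} (i : Fin m) (f : SAlg σ m) : SAlg σ m :=
  fun S => if i ∈ S then 0 else osgn i S • f (insert i S)

/-- Left multiplication by the odd coordinate `θ_i`. -/
def oddM {σ : Type} {m : ℕ} (i : Fin m) (f : SAlg σ m) : SAlg σ m :=
  fun S => if i ∈ S then osgn i (S.erase i) • f (S.erase i) else 0

-- sign lemmas
lemma osgn_insert {m : ℕ} (i : Fin m) {j : Fin m} {T : Finset (Fin m)} (hj : j ∉ T) :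
    osgn i (insert j T) = (if j < i then -1 else 1) * osgn i T := by
  unfold osgn
  rw [Finset.filter_insert]
  split
  · rw [Finset.card_insert_of_notMem (fun h => hj (Finset.mem_of_mem_filter j h))]
    rw [pow_succ]; ring
  · simp

lemma osgn_mul_self {m : ℕ} (i : Fin m) (S : Finset (Fin m)) : osgn i S * osgn i S = 1 := by
  unfold osgn
  rw [← pow_add]
  exact Even.neg_one_pow ⟨_, rfl⟩

lemma smul_cancel {M : Type*} [AddCommGroup M] [Module ℝ M] (a b c d : ℝ) (x : M)
    (h : a * b + c * d = 0) : a • b • x + c • d • x = 0 := by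
  rw [smul_smul, smul_smul, ← add_smul, h, zero_smul]

variable {σ : Type} {m : ℕ}

lemma rel_dd (i j : Fin m) (f : SAlg σ m) :
    oddD i (oddD j f) + oddD j (oddD i f) = 0 := by
  funext S
  show oddD i (oddD j f) S + oddD j (oddD i f) S = 0
  by_cases hij : i = j
  · subst hij
    simp [oddD, Finset.mem_insert_self]
  by_cases hi : i ∈ S <;> by_cases hj : j ∈ S
  · simp [oddD, hi, hj]
  · simp [oddD, hi, hj, Finset.mem_insert, hij]
  · simp [oddD, hi, hj, Finset.mem_insert, Ne.symm hij]
  · simp only [oddD, hi, hj, if_neg, Finset.mem_insert, hij, Ne.symm hij, or_false,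
      if_false, ite_false]
    rw [Finset.insert_comm]
    apply smul_cancel
    rw [osgn_insert j hi, osgn_insert i hj]
    rcases lt_or_gt_of_ne (fun h : i = j => hij h) with h | h <;>
      simp [h, h.not_gt] <;> ring

lemma rel_dM (i j : Fin m) (f : SAlg σ m) :
    oddD i (oddM j f) + oddM j (oddD i f) = if i = j then f else 0 := by
  funext S
  show oddD i (oddM j f) S + oddM j (oddD i f) S = (if i = j then f else 0) S
  by_cases hij : i = j
  · subst hij
    simp only [if_pos rfl]
    by_cases hi : i ∈ S
    · simp [oddD, oddM, hi, Finset.notMem_erase, smul_smul, osgn_mul_self,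
        Finset.insert_erase hi]
    · simp [oddD, oddM, hi, Finset.mem_insert_self, Finset.erase_insert hi,
        smul_smul, osgn_mul_self]
  · simp only [if_neg hij]
    by_cases hi : i ∈ S <;> by_cases hj : j ∈ S
    · simp [oddD, oddM, hi, hj, Finset.mem_erase, hij]
    · simp [oddD, oddM, hi, hj]
    · -- i ∉ S, j ∈ S : sign case
      have hij' : i ∉ S.erase j := fun h => hi (Finset.mem_of_mem_erase h)
      simp only [oddD, oddM, hi, hj, if_neg, if_pos, ite_false, ite_true,
        Finset.mem_insert, Ne.symm hij, or_true, hij', false_or,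
        Finset.erase_insert_of_ne hij, Pi.zero_apply]
      apply smul_cancel
      have hSj : S = insert j (S.erase j) := (Finset.insert_erase hj).symm
      rw [osgn_insert j hij']
      nth_rewrite 1 [hSj]
      rw [osgn_insert i (Finset.notMem_erase j S)]
      rcases lt_or_gt_of_ne (fun h : i = j => hij h) with h | h <;>
        simp [h, h.not_gt] <;> ring
    · simp [oddD, oddM, hi, hj, Finset.mem_insert, Ne.symm hij]

lemma rel_MM (i j : Fin m) (f : SAlg σ m) :
    oddM i (oddM j f) + oddM j (oddM i f) = 0 := by
  funext S
  show oddM i (oddM j f) S + oddM j (oddM i f) S = 0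
  by_cases hij : i = j
  · subst hij
    simp [oddM, Finset.notMem_erase]
  by_cases hi : i ∈ S <;> by_cases hj : j ∈ S
  · have hji : j ∈ S.erase i := Finset.mem_erase.2 ⟨Ne.symm hij, hj⟩
    have hij' : i ∈ S.erase j := Finset.mem_erase.2 ⟨hij, hi⟩
    simp only [oddM, hi, hj, hji, hij', if_pos, Pi.zero_apply, ite_true]
    rw [show (S.erase j).erase i = (S.erase i).erase j from Finset.erase_right_comm]
    apply smul_cancel
    have h1 : S.erase i = insert j ((S.erase i).erase j) := (Finset.insert_erase hji).symm
    have h2 : S.erase j = insert i ((S.erase i).erase j) := by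
      rw [← Finset.erase_right_comm]
      exact (Finset.insert_erase hij').symm
    have hint : i ∉ (S.erase i).erase j := fun h =>
      (Finset.notMem_erase i S) (Finset.mem_of_mem_erase h)
    nth_rewrite 1 [h1]
    rw [h2]
    rw [osgn_insert i (Finset.notMem_erase j _), osgn_insert j hint]
    rcases lt_or_gt_of_ne (fun h : i = j => hij h) with h | h <;>
      simp [h, h.not_gt] <;> ring
  · simp [oddM, hi, hj, Finset.mem_erase]
  · simp [oddM, hi, hj, Finset.mem_erase]
  · simp [oddM, hi, hj]

lemma pderiv_comm' {R : Type*} [CommSemiring R] (v w : σ) (p : MvPolynomial σ R) :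
    pderiv v (pderiv w p) = pderiv w (pderiv v p) := by
  induction p using MvPolynomial.induction_on' with
  | monomial s a =>
    by_cases h : v = w
    · subst h; rfl
    · simp only [pderiv_monomial]
      rw [tsub_right_comm]
      congr 1
      rw [Finsupp.tsub_apply, Finsupp.tsub_apply,
        Finsupp.single_eq_of_ne h, Finsupp.single_eq_of_ne (Ne.symm h)]
      push_cast [Nat.sub_zero]
      ring
  | add p q hp hq => simp [map_add, hp, hq]

lemma comm_ev_oddD (v : σ) (i : Fin m) (f : SAlg σ m) :
    evD v (oddD i f) = oddD i (evD v f) := by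
  funext S
  by_cases hi : i ∈ S <;> simp [evD, oddD, hi]

lemma comm_ev_oddM (v : σ) (i : Fin m) (f : SAlg σ m) :
    evD v (oddM i f) = oddM i (evD v f) := by
  funext S
  by_cases hi : i ∈ S <;> simp [evD, oddM, hi]

lemma comm_ev_ev (v w : σ) (f : SAlg σ m) :
    evD v (evD w f) = evD w (evD v f) := by
  funext S
  show pderiv v (pderiv w (f S)) = pderiv w (pderiv v (f S))
  exact pderiv_comm' v w (f S)
-- Layer 2: bundled endomorphisms
def oddDL (i : Fin m) : Module.End ℝ (SAlg σ m) where
  toFun := oddD i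
  map_add' f g := by
    funext S; by_cases h : i ∈ S <;> simp [oddD, h, smul_add]
  map_smul' c f := by
    funext S; by_cases h : i ∈ S <;> simp [oddD, h, smul_comm c]

def oddML (i : Fin m) : Module.End ℝ (SAlg σ m) where
  toFun := oddM i
  map_add' f g := by
    funext S; by_cases h : i ∈ S <;> simp [oddM, h, smul_add]
  map_smul' c f := by
    funext S; by_cases h : i ∈ S <;> simp [oddM, h, smul_comm c]

def evDL (v : σ) : Module.End ℝ (SAlg σ m) where
  toFun := evD v
  map_add' f g := by funext S; simp [evD]
  map_smul' c f := by funext S; simp [evD]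

@[simp] lemma oddDL_apply (i : Fin m) (f : SAlg σ m) : oddDL i f = oddD i f := rfl
@[simp] lemma oddML_apply (i : Fin m) (f : SAlg σ m) : oddML i f = oddM i f := rfl
@[simp] lemma evDL_apply (v : σ) (f : SAlg σ m) : evDL v f = evD v f := rfl

lemma reldd (i j : Fin m) :
    oddDL i * oddDL j + oddDL j * oddDL i = (0 : Module.End ℝ (SAlg σ m)) :=
  LinearMap.ext fun f => by simpa [Module.End.mul_apply] using rel_dd i j f

lemma reldM (i j : Fin m) :
    oddDL i * oddML j + oddML j * oddDL i
      = (if i = j then 1 else 0 : Module.End ℝ (SAlg σ m)) :=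
  LinearMap.ext fun f => by
    by_cases h : i = j <;>
      simpa [Module.End.mul_apply, h] using rel_dM i j f

lemma relMM (i j : Fin m) :
    oddML i * oddML j + oddML j * oddML i = (0 : Module.End ℝ (SAlg σ m)) :=
  LinearMap.ext fun f => by simpa [Module.End.mul_apply] using rel_MM i j f

lemma commED (v : σ) (i : Fin m) :
    (evDL v : Module.End ℝ (SAlg σ m)) * oddDL i = oddDL i * evDL v :=
  LinearMap.ext fun f => by simpa [Module.End.mul_apply] using comm_ev_oddD v i f

lemma commEM (v : σ) (i : Fin m) :
    (evDL v : Module.End ℝ (SAlg σ m)) * oddML i = oddML i * evDL v :=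
  LinearMap.ext fun f => by simpa [Module.End.mul_apply] using comm_ev_oddM v i f

lemma commEE (v w : σ) :
    (evDL v : Module.End ℝ (SAlg σ m)) * evDL w = evDL w * evDL v :=
  LinearMap.ext fun f => by simpa [Module.End.mul_apply] using comm_ev_ev v w f

-- anticommutator helpers
lemma h1f (j1 j2 : Fin m) (v : σ) :
    oddDL j1 * (oddML j2 * evDL v) + (oddML j2 * evDL v) * oddDL j1
      = (if j1 = j2 then evDL v else 0 : Module.End ℝ (SAlg σ m)) := by
  rw [mul_assoc (oddML j2), commED v j1, ← mul_assoc, ← mul_assoc, ← add_mul, reldM j1 j2]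
  split <;> simp

lemma h3f (j1 j2 : Fin m) (v w : σ) :
    (oddML j1 * evDL v) * (oddML j2 * evDL w) + (oddML j2 * evDL w) * (oddML j1 * evDL v)
      = (0 : Module.End ℝ (SAlg σ m)) := by
  have e1 : (oddML j1 * evDL v) * (oddML j2 * evDL w)
      = (oddML j1 * oddML j2) * (evDL v * evDL w) := by
    rw [mul_assoc, ← mul_assoc (evDL v), commEM v j2, mul_assoc (oddML j2), ← mul_assoc]
  have e2 : (oddML j2 * evDL w) * (oddML j1 * evDL v)
      = (oddML j2 * oddML j1) * (evDL v * evDL w) := by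
    rw [mul_assoc, ← mul_assoc (evDL w), commEM w j1, mul_assoc (oddML j1), ← mul_assoc,
      commEE w v]
  rw [e1, e2, ← add_mul, relMM, zero_mul]

lemma anti_add {R : Type*} [Ring R] {A X Y : R} (hX : A * X + X * A = 0)
    (hY : A * Y + Y * A = 0) : A * (X + Y) + (X + Y) * A = 0 := by
  have h : A * (X + Y) + (X + Y) * A = (A * X + X * A) + (A * Y + Y * A) := by noncomm_ring
  rw [h, hX, hY, add_zero]

lemma anti_neg {R : Type*} [Ring R] {A X : R} (hX : A * X + X * A = 0) :
    A * (-X) + (-X) * A = 0 := by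
  have h : A * (-X) + (-X) * A = -(A * X + X * A) := by noncomm_ring
  rw [h, hX, neg_zero]

lemma anti_sub {R : Type*} [Ring R] {A X Y : R} (hX : A * X + X * A = 0)
    (hY : A * Y + Y * A = 0) : A * (X - Y) + (X - Y) * A = 0 := by
  have h : A * (X - Y) + (X - Y) * A = (A * X + X * A) - (A * Y + Y * A) := by noncomm_ring
  rw [h, hX, hY, sub_zero]

lemma anti_comm' {R : Type*} [Ring R] {A X : R} (hX : A * X + X * A = 0) :
    X * A + A * X = 0 := by rw [add_comm]; exact hX

/-- The coordinate superalgebra of `SX = Π((X×ℝ) ⊕ TX ⊕ Λ²₊TX)` over a coordinate patch: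
4 even coordinates `x¹,…,x⁴`, and 8 odd coordinates: `θ` (index 0), `θⁱ` (indices 1–4),
and `θ^{1234}, θ^{1324}, θ^{1423}` (indices 5–7). -/
abbrev ASX := SAlg (Fin 4) 8

/-- index of the odd coordinate `θ` on the trivial factor -/
def th : Fin 8 := 0

/-- index of `θⁱ` -/
def thv (i : Fin 4) : Fin 8 := ⟨1 + i.val, by omega⟩

/-- indices of `θ^{1234}, θ^{1324}, θ^{1423}` -/
def thp (α : Fin 3) : Fin 8 := ⟨5 + α.val, by omega⟩

/-- The components of the canonical element
`M = θ^{1234}⊗(∂₁dx²-∂₂dx¹+∂₃dx⁴-∂₄dx³) + θ^{1324}⊗(∂₁dx³-∂₃dx¹-∂₂dx⁴+∂₄dx²)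
   + θ^{1423}⊗(∂₁dx⁴-∂₄dx¹+∂₂dx³-∂₃dx²)` along `dx¹, …, dx⁴`. -/
def Mop : Fin 4 → ASX → ASX :=
  ![fun f => -(oddM (thp 0) (evD 1 f)) - oddM (thp 1) (evD 2 f) - oddM (thp 2) (evD 3 f),
    fun f => oddM (thp 0) (evD 0 f) - oddM (thp 1) (evD 3 f) + oddM (thp 2) (evD 2 f),
    fun f => -(oddM (thp 0) (evD 3 f)) + oddM (thp 1) (evD 0 f) + oddM (thp 2) (evD 1 f),
    fun f => oddM (thp 0) (evD 2 f) - oddM (thp 1) (evD 1 f) + oddM (thp 2) (evD 0 f)]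

/-- `D₀ = ∂_θ - θⁱ ∂_{xⁱ}` -/
def D0 (f : ASX) : ASX := oddD th f - ∑ i : Fin 4, oddM (thv i) (evD i f)

/-- `Q₀ = ∂_θ + θⁱ ∂_{xⁱ}` -/
def Q0 (f : ASX) : ASX := oddD th f + ∑ i : Fin 4, oddM (thv i) (evD i f)

/-- the `dxⁱ`-component of `D₁ = ∂_{θⁱ} dxⁱ - θ ∂_{xⁱ} dxⁱ - M` -/
def D1 (i : Fin 4) (f : ASX) : ASX := oddD (thv i) f - oddM th (evD i f) - Mop i f

/-- the `dxⁱ`-component of `Q₁ = ∂_{θⁱ} dxⁱ + θ ∂_{xⁱ} dxⁱ + M` -/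
def Q1 (i : Fin 4) (f : ASX) : ASX := oddD (thv i) f + oddM th (evD i f) + Mop i f

-- End-level versions
def BL : Module.End ℝ ASX := ∑ k : Fin 4, oddML (thv k) * evDL k

def MopL : Fin 4 → Module.End ℝ ASX :=
  ![-(oddML (thp 0) * evDL 1) - oddML (thp 1) * evDL 2 - oddML (thp 2) * evDL 3,
    oddML (thp 0) * evDL 0 - oddML (thp 1) * evDL 3 + oddML (thp 2) * evDL 2,
    -(oddML (thp 0) * evDL 3) + oddML (thp 1) * evDL 0 + oddML (thp 2) * evDL 1,
    oddML (thp 0) * evDL 2 - oddML (thp 1) * evDL 1 + oddML (thp 2) * evDL 0]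

lemma MopL_apply (i : Fin 4) (f : ASX) : MopL i f = Mop i f := by
  fin_cases i <;>
    simp [MopL, Mop, Module.End.mul_apply, LinearMap.sub_apply, LinearMap.add_apply,
      LinearMap.neg_apply]

lemma D0_apply (f : ASX) : D0 f = (oddDL th - BL : Module.End ℝ ASX) f := by
  simp [D0, BL, LinearMap.sub_apply, LinearMap.sum_apply, Module.End.mul_apply]

lemma Q0_apply (f : ASX) : Q0 f = (oddDL th + BL : Module.End ℝ ASX) f := by
  simp [Q0, BL, LinearMap.add_apply, LinearMap.sum_apply, Module.End.mul_apply]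

lemma D1_apply (i : Fin 4) (f : ASX) :
    D1 i f = (oddDL (thv i) - oddML th * evDL i - MopL i : Module.End ℝ ASX) f := by
  simp [D1, LinearMap.sub_apply, Module.End.mul_apply, MopL_apply]

lemma Q1_apply (i : Fin 4) (f : ASX) :
    Q1 i f = (oddDL (thv i) + oddML th * evDL i + MopL i : Module.End ℝ ASX) f := by
  simp [Q1, LinearMap.add_apply, Module.End.mul_apply, MopL_apply]

lemma th_ne_thp (α : Fin 3) : th ≠ thp α := by
  simp [th, thp, Fin.ext_iff]; omega

lemma thv_ne_thp (k : Fin 4) (α : Fin 3) : thv k ≠ thp α := by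
  simp [thv, thp, Fin.ext_iff]; omega

lemma th_ne_thv (i : Fin 4) : th ≠ thv i := by
  simp [th, thv, Fin.ext_iff]; omega

-- the six anticommutators
lemma e1 (i : Fin 4) :
    oddDL th * oddDL (thv i) + oddDL (thv i) * oddDL th = (0 : Module.End ℝ ASX) :=
  reldd th (thv i)

lemma e2 (i : Fin 4) :
    oddDL th * (oddML th * evDL i) + (oddML th * evDL i) * oddDL th
      = (evDL i : Module.End ℝ ASX) := by
  simpa using h1f th th i

lemma hDpM (j : Fin 8) (α : Fin 3) (v : Fin 4) (h : j ≠ thp α) :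
    oddDL j * (oddML (thp α) * evDL v) + (oddML (thp α) * evDL v) * oddDL j
      = (0 : Module.End ℝ ASX) := by
  simpa [h] using h1f j (thp α) v

lemma e3 (i : Fin 4) :
    oddDL th * MopL i + MopL i * oddDL th = (0 : Module.End ℝ ASX) := by
  have t : ∀ (α : Fin 3) (v : Fin 4),
      oddDL th * (oddML (thp α) * evDL v) + (oddML (thp α) * evDL v) * oddDL th
        = (0 : Module.End ℝ ASX) := fun α v => hDpM th α v (th_ne_thp α)
  fin_cases i
  · exact anti_sub (anti_sub (anti_neg (t 0 1)) (t 1 2)) (t 2 3)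
  · exact anti_add (anti_sub (t 0 0) (t 1 3)) (t 2 2)
  · exact anti_add (anti_add (anti_neg (t 0 3)) (t 1 0)) (t 2 1)
  · exact anti_add (anti_sub (t 0 2) (t 1 1)) (t 2 0)

lemma BL_anti (X : Module.End ℝ ASX)
    (h : ∀ k : Fin 4, X * (oddML (thv k) * evDL k) + (oddML (thv k) * evDL k) * X = 0) :
    BL * X + X * BL = 0 := by
  unfold BL
  rw [Finset.sum_mul, Finset.mul_sum, ← Finset.sum_add_distrib]
  refine Finset.sum_eq_zero fun k _ => ?_
  rw [add_comm]; exact h k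

lemma e4 (i : Fin 4) :
    BL * oddDL (thv i) + oddDL (thv i) * BL = (evDL i : Module.End ℝ ASX) := by
  unfold BL
  rw [Finset.sum_mul, Finset.mul_sum, ← Finset.sum_add_distrib]
  have key : ∀ k : Fin 4,
      (oddML (thv k) * evDL k) * oddDL (thv i) + oddDL (thv i) * (oddML (thv k) * evDL k)
        = (if i = k then evDL k else 0 : Module.End ℝ ASX) := by
    intro k
    rw [add_comm]
    rw [h1f (thv i) (thv k) k]
    congr 1
    simp [thv, Fin.ext_iff]
  rw [Finset.sum_congr rfl fun k _ => key k]
  simp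

lemma e5 (i : Fin 4) :
    BL * (oddML th * evDL i) + (oddML th * evDL i) * BL = (0 : Module.End ℝ ASX) :=
  BL_anti _ fun k => h3f th (thv k) i k

lemma e6 (i : Fin 4) : BL * MopL i + MopL i * BL = (0 : Module.End ℝ ASX) := by
  refine BL_anti _ fun k => ?_
  rw [add_comm]
  have t : ∀ (α : Fin 3) (v : Fin 4),
      (oddML (thv k) * evDL k) * (oddML (thp α) * evDL v)
        + (oddML (thp α) * evDL v) * (oddML (thv k) * evDL k) = (0 : Module.End ℝ ASX) :=
    fun α v => h3f (thv k) (thp α) k v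
  fin_cases i
  · exact anti_sub (anti_sub (anti_neg (t 0 1)) (t 1 2)) (t 2 3)
  · exact anti_add (anti_sub (t 0 0) (t 1 3)) (t 2 2)
  · exact anti_add (anti_add (anti_neg (t 0 3)) (t 1 0)) (t 2 1)
  · exact anti_add (anti_sub (t 0 2) (t 1 1)) (t 2 0)

lemma keyEndD (i : Fin 4) :
    (oddDL th - BL) * (oddDL (thv i) - oddML th * evDL i - MopL i)
      + (oddDL (thv i) - oddML th * evDL i - MopL i) * (oddDL th - BL)
      = -(evDL i) - (evDL i : Module.End ℝ ASX) := by
  have expand :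
      (oddDL th - BL) * (oddDL (thv i) - oddML th * evDL i - MopL i)
        + (oddDL (thv i) - oddML th * evDL i - MopL i) * (oddDL th - BL)
      = (oddDL th * oddDL (thv i) + oddDL (thv i) * oddDL th)
        - (oddDL th * (oddML th * evDL i) + (oddML th * evDL i) * oddDL th)
        - (oddDL th * MopL i + MopL i * oddDL th)
        - (BL * oddDL (thv i) + oddDL (thv i) * BL)
        + (BL * (oddML th * evDL i) + (oddML th * evDL i) * BL)
        + (BL * MopL i + MopL i * BL) := by
    simp only [mul_sub, sub_mul, mul_add, add_mul]
    abel
  rw [expand, e1, e2, e3, e4, e5, e6]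
  abel

lemma keyEndQ (i : Fin 4) :
    (oddDL th + BL) * (oddDL (thv i) + oddML th * evDL i + MopL i)
      + (oddDL (thv i) + oddML th * evDL i + MopL i) * (oddDL th + BL)
      = (evDL i) + (evDL i : Module.End ℝ ASX) := by
  have expand :
      (oddDL th + BL) * (oddDL (thv i) + oddML th * evDL i + MopL i)
        + (oddDL (thv i) + oddML th * evDL i + MopL i) * (oddDL th + BL)
      = (oddDL th * oddDL (thv i) + oddDL (thv i) * oddDL th)
        + (oddDL th * (oddML th * evDL i) + (oddML th * evDL i) * oddDL th)
        + (oddDL th * MopL i + MopL i * oddDL th)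
        + (BL * oddDL (thv i) + oddDL (thv i) * BL)
        + (BL * (oddML th * evDL i) + (oddML th * evDL i) * BL)
        + (BL * MopL i + MopL i * BL) := by
    simp only [mul_sub, sub_mul, mul_add, add_mul]
    abel
  rw [expand, e1, e2, e3, e4, e5, e6]
  abel


/-- with the bracket `[A,B] = ½(AB - (-1)^{π(A)π(B)} BA)`,
`[D₀, D₁] = -d` and `[Q₀, Q₁] = d` componentwise along `dxⁱ`, where `d` is the de Rham
differential (whose `dxⁱ`-component is `∂_{xⁱ}` under the identification of functions on
the `ΠTX` component with differential forms). -/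
theorem D0_D1_bracket (i : Fin 4) (f : ASX) :
    (1 / 2 : ℝ) • (D0 (D1 i f) + D1 i (D0 f)) = -(evD i f) ∧
    (1 / 2 : ℝ) • (Q0 (Q1 i f) + Q1 i (Q0 f)) = evD i f := by
  constructor
  · have h : D0 (D1 i f) + D1 i (D0 f) = -(evD i f) - evD i f := by
      calc D0 (D1 i f) + D1 i (D0 f)
          = (oddDL th - BL : Module.End ℝ ASX)
              ((oddDL (thv i) - oddML th * evDL i - MopL i : Module.End ℝ ASX) f)
            + (oddDL (thv i) - oddML th * evDL i - MopL i : Module.End ℝ ASX)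
              ((oddDL th - BL : Module.End ℝ ASX) f) := by
            rw [D0_apply (D1 i f), D1_apply i (D0 f), D1_apply i f, D0_apply f]
        _ = ((oddDL th - BL) * (oddDL (thv i) - oddML th * evDL i - MopL i)
            + (oddDL (thv i) - oddML th * evDL i - MopL i) * (oddDL th - BL)
            : Module.End ℝ ASX) f := by
            simp [Module.End.mul_apply]
        _ = (-(evDL i) - (evDL i) : Module.End ℝ ASX) f := by rw [keyEndD i]
        _ = -(evD i f) - evD i f := by simp
    rw [h]
    module
  · have h : Q0 (Q1 i f) + Q1 i (Q0 f) = evD i f + evD i f := by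
      calc Q0 (Q1 i f) + Q1 i (Q0 f)
          = (oddDL th + BL : Module.End ℝ ASX)
              ((oddDL (thv i) + oddML th * evDL i + MopL i : Module.End ℝ ASX) f)
            + (oddDL (thv i) + oddML th * evDL i + MopL i : Module.End ℝ ASX)
              ((oddDL th + BL : Module.End ℝ ASX) f) := by
            rw [Q0_apply (Q1 i f), Q1_apply i (Q0 f), Q1_apply i f, Q0_apply f]
        _ = ((oddDL th + BL) * (oddDL (thv i) + oddML th * evDL i + MopL i)
            + (oddDL (thv i) + oddML th * evDL i + MopL i) * (oddDL th + BL)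
            : Module.End ℝ ASX) f := by
            simp [Module.End.mul_apply]
        _ = ((evDL i) + (evDL i) : Module.End ℝ ASX) f := by rw [keyEndQ i]
        _ = evD i f + evD i f := by simp
    rw [h]
    module

end
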